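/- Let β > 0, σ₀ > 0, σ_ε > 0 and p ∈ (0,1]; set v := σ_ε²/(β²σ₀²) and define f(φ) := (βσ₀/√φ)(1 − p(φ−1)/2) + √(β²σ₀²/φ + σ_ε²)·p(φ−1)/2 and g(φ) := −√φ/p + (1/2)(1 − (1+vφ)^{−1/2})·√φ·(φ−1) + (√(1+vφ) − 1)·φ^{3/2} for φ ≥ 1. Then: (i) f′(φ) = (βσ₀ p/(2φ²))·g(φ) for all φ ≥ 1; (ii) g′(φ) ≥ (1/2)·φ^{−1/2}·g(1) for all φ ≥ 1; (iii) consequently, if g(1) ≥ 0 then f′(φ) ≥ 0 for all φ ≥ 1, so f is minimized over [1,∞) at φ = 1. -/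

import Mathlib

lemma auxG_deriv (p v φ : ℝ) (hp : 0 < p) (hv0 : 0 < v) (hφ : 0 < φ) :
    HasDerivAt (fun x => -Real.sqrt x/p + (1/2)*(1 - 1/Real.sqrt (1+v*x))*Real.sqrt x*(x-1)
        + (Real.sqrt (1+v*x) - 1)*(x*Real.sqrt x))
      (-1/(2*p*Real.sqrt φ) + (1/2)*(v/(2*Real.sqrt (1+v*φ)^3))*Real.sqrt φ*(φ-1)
        + (1/2)*(1 - 1/Real.sqrt (1+v*φ))*((φ-1)/(2*Real.sqrt φ) + Real.sqrt φ)
        + (v/(2*Real.sqrt (1+v*φ)))*(φ*Real.sqrt φ)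
        + (Real.sqrt (1+v*φ) - 1)*(Real.sqrt φ + φ/(2*Real.sqrt φ))) φ := by
  have hφne : φ ≠ 0 := ne_of_gt hφ
  have hu : 0 < Real.sqrt φ := Real.sqrt_pos.2 hφ
  have harg : 0 < 1 + v*φ := by nlinarith
  have ht : 0 < Real.sqrt (1+v*φ) := Real.sqrt_pos.2 harg
  have hsq : HasDerivAt (fun x : ℝ => Real.sqrt x) (1/(2*Real.sqrt φ)) φ := by
    simpa using (hasDerivAt_id φ).sqrt hφne
  have hlin : HasDerivAt (fun x : ℝ => 1 + v*x) v φ := by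
    simpa using ((hasDerivAt_id φ).const_mul v).const_add 1
  have hts : HasDerivAt (fun x : ℝ => Real.sqrt (1+v*x)) (v/(2*Real.sqrt (1+v*φ))) φ :=
    hlin.sqrt (ne_of_gt harg)
  have h1 : HasDerivAt (fun x : ℝ => -Real.sqrt x/p) (-(1/(2*Real.sqrt φ))/p) φ :=
    hsq.neg.div_const p
  have hinv : HasDerivAt (fun x : ℝ => 1/Real.sqrt (1+v*x))
      ((0*Real.sqrt (1+v*φ) - 1*(v/(2*Real.sqrt (1+v*φ))))/(Real.sqrt (1+v*φ))^2) φ :=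
    (hasDerivAt_const φ (1:ℝ)).div hts (ne_of_gt ht)
  have h2a : HasDerivAt (fun x : ℝ => (1/2)*(1 - 1/Real.sqrt (1+v*x)))
      ((1/2)*(0 - (0*Real.sqrt (1+v*φ) - 1*(v/(2*Real.sqrt (1+v*φ))))/(Real.sqrt (1+v*φ))^2)) φ :=
    ((hasDerivAt_const φ (1:ℝ)).sub hinv).const_mul (1/2)
  have h2b := (h2a.mul hsq).mul ((hasDerivAt_id φ).sub_const 1)
  have h3 := (hts.sub_const 1).mul ((hasDerivAt_id φ).mul hsq)
  have h := (h1.add h2b).add h3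
  refine h.congr_deriv ?_
  simp only [id, Pi.mul_apply]
  set b := Real.sqrt (1+v*φ) with hb
  set a := Real.sqrt φ with ha
  have ha2 : φ = a^2 := (Real.sq_sqrt hφ.le).symm
  have hane : a ≠ 0 := ne_of_gt hu
  have hbne : b ≠ 0 := ne_of_gt ht
  have hb2 : b^2 = 1 + v*φ := Real.sq_sqrt harg.le
  have hveq : v = (b^2 - 1)/a^2 := by rw [hb2, ha2]; field_simp; ring
  rw [ha2, hveq]
  field_simp
  ring

lemma auxF_deriv (β σ0 σε p v φ : ℝ) (hβ : 0 < β) (hσ0 : 0 < σ0) (hσε : 0 < σε)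
    (hp : 0 < p) (hv : v = σε^2/(β^2*σ0^2)) (hφ : 0 < φ) :
    HasDerivAt (fun x => β*σ0/Real.sqrt x * (1 - p*(x-1)/2)
        + Real.sqrt (β^2*σ0^2/x + σε^2) * (p*(x-1)/2))
      (β*σ0*p/(2*φ^2) * (-Real.sqrt φ/p
        + (1/2)*(1 - 1/Real.sqrt (1+v*φ))*Real.sqrt φ*(φ-1)
        + (Real.sqrt (1+v*φ) - 1)*(φ*Real.sqrt φ))) φ := by
  have hφne : φ ≠ 0 := ne_of_gt hφ
  have hu : 0 < Real.sqrt φ := Real.sqrt_pos.2 hφ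
  have hc : 0 < β*σ0 := by positivity
  have hargw : 0 < β^2*σ0^2/φ + σε^2 := by positivity
  have hw : 0 < Real.sqrt (β^2*σ0^2/φ + σε^2) := Real.sqrt_pos.2 hargw
  have hargt : 0 < 1 + v*φ := by
    have : 0 < v := by rw [hv]; positivity
    nlinarith
  have ht : 0 < Real.sqrt (1+v*φ) := Real.sqrt_pos.2 hargt
  have hsq : HasDerivAt (fun x : ℝ => Real.sqrt x) (1/(2*Real.sqrt φ)) φ := by
    simpa using (hasDerivAt_id φ).sqrt hφne
  have h1a : HasDerivAt (fun x : ℝ => β*σ0/Real.sqrt x)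
      ((0*Real.sqrt φ - (β*σ0)*(1/(2*Real.sqrt φ)))/(Real.sqrt φ)^2) φ :=
    (hasDerivAt_const φ (β*σ0)).div hsq (ne_of_gt hu)
  have h1b : HasDerivAt (fun x : ℝ => 1 - p*(x-1)/2) (-(p*1/2)) φ := by
    simpa using ((((hasDerivAt_id φ).sub_const 1).const_mul p).div_const 2).const_sub 1
  have h2inner : HasDerivAt (fun x : ℝ => β^2*σ0^2/x + σε^2)
      ((0*φ - (β^2*σ0^2)*1)/φ^2) φ :=
    (((hasDerivAt_const φ (β^2*σ0^2)).div (hasDerivAt_id φ) hφne)).add_const (σε^2)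
  have h2a : HasDerivAt (fun x : ℝ => Real.sqrt (β^2*σ0^2/x + σε^2))
      (((0*φ - (β^2*σ0^2)*1)/φ^2) / (2*Real.sqrt (β^2*σ0^2/φ + σε^2))) φ :=
    h2inner.sqrt (ne_of_gt hargw)
  have h2b : HasDerivAt (fun x : ℝ => p*(x-1)/2) (p*1/2) φ :=
    (((hasDerivAt_id φ).sub_const 1).const_mul p).div_const 2
  have h := (h1a.mul h1b).add (h2a.mul h2b)
  refine h.congr_deriv ?_
  set w := Real.sqrt (β^2*σ0^2/φ + σε^2) with hwdef
  set b := Real.sqrt (1+v*φ) with hbdef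
  set a := Real.sqrt φ with hadef
  have ha2 : φ = a^2 := (Real.sq_sqrt hφ.le).symm
  have hane : a ≠ 0 := ne_of_gt hu
  have hbne : b ≠ 0 := ne_of_gt ht
  have hb2 : b^2 = 1 + v*φ := Real.sq_sqrt hargt.le
  have hwb : w = β*σ0*b/a := by
    have key : β^2*σ0^2/φ + σε^2 = (β*σ0*b/a)^2 := by
      rw [div_pow, mul_pow, mul_pow, hb2, ← ha2, hv]; field_simp
    rw [hwdef, key]
    exact Real.sqrt_sq (by positivity)
  rw [hwb, ha2]
  field_simp
  ring

lemma auxG_ineq (p v φ : ℝ) (hp : 0 < p) (hv0 : 0 < v) (hφ : 1 ≤ φ) :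
    1/(2*Real.sqrt φ) * (Real.sqrt (1+v) - 1 - 1/p)
      ≤ -1/(2*p*Real.sqrt φ) + (1/2)*(v/(2*Real.sqrt (1+v*φ)^3))*Real.sqrt φ*(φ-1)
        + (1/2)*(1 - 1/Real.sqrt (1+v*φ))*((φ-1)/(2*Real.sqrt φ) + Real.sqrt φ)
        + (v/(2*Real.sqrt (1+v*φ)))*(φ*Real.sqrt φ)
        + (Real.sqrt (1+v*φ) - 1)*(Real.sqrt φ + φ/(2*Real.sqrt φ)) := by
  have hφ0 : (0:ℝ) < φ := lt_of_lt_of_le one_pos hφ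
  set u := Real.sqrt φ with hu
  set t := Real.sqrt (1+v*φ) with htd
  set t1 := Real.sqrt (1+v) with ht1d
  have hu1 : 1 ≤ u := by
    have h := Real.sqrt_le_sqrt hφ; simpa only [Real.sqrt_one] using h
  have hu0 : 0 < u := lt_of_lt_of_le one_pos hu1
  have ht1 : 1 ≤ t1 := by
    have h := Real.sqrt_le_sqrt (show (1:ℝ) ≤ 1+v by linarith)
    simpa only [Real.sqrt_one] using h
  have htt1 : t1 ≤ t := Real.sqrt_le_sqrt (by nlinarith)
  have ht1' : 1 ≤ t := le_trans ht1 htt1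
  have ht0 : 0 < t := lt_of_lt_of_le one_pos ht1'
  have hT2 : 0 ≤ (1/2)*(v/(2*t^3))*u*(φ-1) :=
    mul_nonneg (by positivity) (by linarith)
  have hT3 : 0 ≤ (1/2)*(1 - 1/t)*((φ-1)/(2*u) + u) := by
    apply mul_nonneg (mul_nonneg (by norm_num) _)
      (add_nonneg (div_nonneg (by linarith) (by positivity)) hu0.le)
    have : 1/t ≤ 1 := by rw [div_le_one ht0]; exact ht1'
    linarith
  have hT4 : 0 ≤ (v/(2*t))*(φ*u) := by positivity
  have hT5 : (t1-1)*(1/(2*u)) ≤ (t-1)*(u + φ/(2*u)) := by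
    apply mul_le_mul (by linarith) _ (by positivity) (by linarith)
    have h1 : 1/(2*u) ≤ φ/(2*u) := by
      apply div_le_div_of_nonneg_right hφ; positivity
    linarith
  have hexp : 1/(2*u) * (t1 - 1 - 1/p) = (t1-1)*(1/(2*u)) + (-1/(2*p*u)) := by
    field_simp; ring
  linarith

/-- With v = σ_ε²/(β²σ₀²) and
g(φ) = −√φ/p + (1/2)(1 − (1+vφ)^{−1/2})√φ(φ−1) + (√(1+vφ) − 1)φ^{3/2}:
(i) f′(φ) = (βσ₀p/(2φ²))·g(φ) on [1,∞); (ii) g′(φ) ≥ (1/2)φ^{−1/2}g(1) for φ ≥ 1;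
(iii) if g(1) ≥ 0 then f′(φ) ≥ 0 for all φ ≥ 1, so f is minimized on [1,∞) at φ = 1. -/
theorem personalization_derivative_factorization
    (β σ0 σε p : ℝ) (hβ : 0 < β) (hσ0 : 0 < σ0) (hσε : 0 < σε)
    (hp : p ∈ Set.Ioc (0:ℝ) 1)
    (v : ℝ) (hv : v = σε^2/(β^2*σ0^2))
    (f g : ℝ → ℝ)
    (hf : ∀ φ, 1 ≤ φ → f φ = β*σ0/Real.sqrt φ * (1 - p*(φ-1)/2)
        + Real.sqrt (β^2*σ0^2/φ + σε^2) * (p*(φ-1)/2))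
    (hg : ∀ φ, 0 < φ → g φ = -Real.sqrt φ/p
        + (1/2) * (1 - 1/Real.sqrt (1 + v*φ)) * Real.sqrt φ * (φ - 1)
        + (Real.sqrt (1 + v*φ) - 1) * (φ * Real.sqrt φ)) :
    (∀ φ, 1 ≤ φ →
      HasDerivWithinAt f (β*σ0*p/(2*φ^2) * g φ) (Set.Ici 1) φ) ∧
    (∀ φ, 1 ≤ φ → 1/(2*Real.sqrt φ) * g 1 ≤ deriv g φ) ∧
    (0 ≤ g 1 →
      (∀ φ, 1 ≤ φ → 0 ≤ β*σ0*p/(2*φ^2) * g φ) ∧ IsMinOn f (Set.Ici 1) 1) := by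
  obtain ⟨hp0, hp1⟩ := hp
  have hv0 : 0 < v := by rw [hv]; positivity
  -- Part (i)
  have part1 : ∀ φ, 1 ≤ φ →
      HasDerivWithinAt f (β*σ0*p/(2*φ^2) * g φ) (Set.Ici 1) φ := by
    intro φ hφ1
    have hφ0 : (0:ℝ) < φ := lt_of_lt_of_le one_pos hφ1
    have hF := auxF_deriv β σ0 σε p v φ hβ hσ0 hσε hp0 hv hφ0
    rw [hg φ hφ0]
    exact (hF.hasDerivWithinAt).congr (fun y hy => hf y hy) (hf φ hφ1)
  -- g(1)
  have hg1 : g 1 = Real.sqrt (1+v) - 1 - 1/p := by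
    rw [hg 1 one_pos]
    norm_num [Real.sqrt_one]
    ring
  -- Part (ii)
  have part2 : ∀ φ, 1 ≤ φ → 1/(2*Real.sqrt φ) * g 1 ≤ deriv g φ := by
    intro φ hφ1
    have hφ0 : (0:ℝ) < φ := lt_of_lt_of_le one_pos hφ1
    have hEq : g =ᶠ[nhds φ] (fun x => -Real.sqrt x/p
        + (1/2)*(1 - 1/Real.sqrt (1+v*x))*Real.sqrt x*(x-1)
        + (Real.sqrt (1+v*x) - 1)*(x*Real.sqrt x)) :=
      Filter.eventuallyEq_of_mem (IsOpen.mem_nhds isOpen_Ioi hφ0) (fun x hx => hg x hx)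
    rw [hEq.deriv_eq, (auxG_deriv p v φ hp0 hv0 hφ0).deriv, hg1]
    exact auxG_ineq p v φ hp0 hv0 hφ1
  refine ⟨part1, part2, fun hg1nn => ?_⟩
  -- g nonneg on [1, ∞)
  have hgmono : MonotoneOn g (Set.Ici 1) := by
    apply monotoneOn_of_deriv_nonneg (convex_Ici 1)
    · apply ContinuousOn.congr (f := fun x => -Real.sqrt x/p
        + (1/2)*(1 - 1/Real.sqrt (1+v*x))*Real.sqrt x*(x-1)
        + (Real.sqrt (1+v*x) - 1)*(x*Real.sqrt x))
      · intro x hx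
        have hx0 : (0:ℝ) < x := lt_of_lt_of_le one_pos hx
        exact (auxG_deriv p v x hp0 hv0 hx0).continuousAt.continuousWithinAt
      · intro x hx
        exact hg x (lt_of_lt_of_le one_pos hx)
    · rw [interior_Ici]
      intro x hx
      have hx0 : (0:ℝ) < x := lt_trans one_pos hx
      have hEq : (fun y => -Real.sqrt y/p
          + (1/2)*(1 - 1/Real.sqrt (1+v*y))*Real.sqrt y*(y-1)
          + (Real.sqrt (1+v*y) - 1)*(y*Real.sqrt y)) =ᶠ[nhds x] g :=
        Filter.eventuallyEq_of_mem (IsOpen.mem_nhds isOpen_Ioi hx0)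
          (fun y hy => (hg y hy).symm)
      exact (((auxG_deriv p v x hp0 hv0 hx0).congr_of_eventuallyEq
        hEq.symm).differentiableAt).differentiableWithinAt
    · rw [interior_Ici]
      intro x hx
      have hx1 : (1:ℝ) ≤ x := le_of_lt hx
      have h := part2 x hx1
      have h0 : 0 ≤ 1/(2*Real.sqrt x) * g 1 := by
        apply mul_nonneg _ hg1nn
        positivity
      linarith
  have hgnn : ∀ φ, 1 ≤ φ → 0 ≤ g φ := fun φ hφ1 =>
    le_trans hg1nn (hgmono (Set.mem_Ici.2 le_rfl) hφ1 hφ1)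
  have hDnn : ∀ φ, 1 ≤ φ → 0 ≤ β*σ0*p/(2*φ^2) * g φ := by
    intro φ hφ1
    have hφ0 : (0:ℝ) < φ := lt_of_lt_of_le one_pos hφ1
    exact mul_nonneg (by positivity) (hgnn φ hφ1)
  refine ⟨hDnn, ?_⟩
  -- f monotone, hence minimized at 1
  have hfmono : MonotoneOn f (Set.Ici 1) := by
    apply monotoneOn_of_deriv_nonneg (convex_Ici 1)
    · exact fun x hx => (part1 x hx).continuousWithinAt
    · rw [interior_Ici]
      intro x hx
      have hx1 : (1:ℝ) ≤ x := le_of_lt hx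
      have hEq : (fun y => β*σ0/Real.sqrt y * (1 - p*(y-1)/2)
          + Real.sqrt (β^2*σ0^2/y + σε^2) * (p*(y-1)/2)) =ᶠ[nhds x] f :=
        Filter.eventuallyEq_of_mem (Ici_mem_nhds hx) (fun y hy => (hf y hy).symm)
      exact (((auxF_deriv β σ0 σε p v x hβ hσ0 hσε hp0 hv
        (lt_of_lt_of_le one_pos hx1)).congr_of_eventuallyEq
        hEq.symm).differentiableAt).differentiableWithinAt
    · rw [interior_Ici]
      intro x hx
      have hx1 : (1:ℝ) ≤ x := le_of_lt hx
      have hx0 : (0:ℝ) < x := lt_of_lt_of_le one_pos hx1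
      have hEq : f =ᶠ[nhds x] (fun y => β*σ0/Real.sqrt y * (1 - p*(y-1)/2)
          + Real.sqrt (β^2*σ0^2/y + σε^2) * (p*(y-1)/2)) :=
        Filter.eventuallyEq_of_mem (Ici_mem_nhds hx) (fun y hy => hf y hy)
      have hd : HasDerivAt f (β*σ0*p/(2*x^2) * (-Real.sqrt x/p
          + (1/2)*(1 - 1/Real.sqrt (1+v*x))*Real.sqrt x*(x-1)
          + (Real.sqrt (1+v*x) - 1)*(x*Real.sqrt x))) x :=
        (auxF_deriv β σ0 σε p v x hβ hσ0 hσε hp0 hv hx0).congr_of_eventuallyEq hEq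
      rw [hd.deriv]
      have := hDnn x hx1
      rwa [hg x hx0] at this
  intro x hx
  exact hfmono (Set.mem_Ici.2 le_rfl) hx hx
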